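/- arXiv:1001.1597 — 6 statements merged into one kernel-verified Lean document; each statement's English description precedes it below -/
import Mathlib

section
/- Let D be a commutative integral domain, s ∈ D^n with n ≥ 2, and suppose f ∈ D[x] is a nonzero annihilator of the prefix s^(n-1) = (s_1,...,s_{n-1}) with Δ_n(f) ≠ 0. Then every nonzero annihilator g of s satisfies deg(g) ≥ n − deg(f). -/
open Polynomial Finset

/-- `f` is a (nonzero) annihilator of the finite sequence `s_1,…,s_n`:
`f_0 s_{j-d} + … + f_d s_j = 0` for all `d+1 ≤ j ≤ n`, where `d = deg f`. -/
def Annih (D : Type*) [CommRing D] (s : ℕ → D) (n : ℕ) (f : Polynomial D) : Prop :=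
  f ≠ 0 ∧ ∀ j : ℕ, f.natDegree + 1 ≤ j → j ≤ n →
    ∑ k ∈ Finset.range (f.natDegree + 1), f.coeff k * s (j - f.natDegree + k) = 0

/-- The linear complexity of `s_1,…,s_n`: minimal degree of a nonzero annihilator. -/
noncomputable def LC (D : Type*) [CommRing D] (s : ℕ → D) (n : ℕ) : ℕ :=
  sInf {d : ℕ | ∃ f : Polynomial D, Annih D s n f ∧ f.natDegree = d}

/-- The discrepancy `Δ_n(f) = Σ_{k=0}^{d} f_k s_{n-d+k}`. -/
def disc (D : Type*) [CommRing D] (s : ℕ → D) (n : ℕ) (f : Polynomial D) : D :=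
  ∑ k ∈ Finset.range (f.natDegree + 1), f.coeff k * s (n - f.natDegree + k)

theorem deg_ge_of_disc_ne_zero (D : Type*) [CommRing D] [IsDomain D]
    (n : ℕ) (hn : 2 ≤ n) (s : ℕ → D) (f : Polynomial D)
    (hf : Annih D s (n - 1) f) (hΔ : disc D s n f ≠ 0)
    (g : Polynomial D) (hg : Annih D s n g) :
    n - f.natDegree ≤ g.natDegree := by
  obtain ⟨hf0, hfa⟩ := hf
  obtain ⟨hg0, hga⟩ := hg
  by_contra h
  push_neg at h
  set d := f.natDegree with hd
  set e := g.natDegree with he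
  have hden : d + e + 1 ≤ n := by omega
  have key : g.coeff e * disc D s n f = 0 := by
    have S1 : ∑ k ∈ Finset.range (e + 1), g.coeff k *
        ∑ j ∈ Finset.range (d + 1), f.coeff j * s (n - (d + e) + (k + j))
        = g.coeff e * disc D s n f := by
      rw [Finset.sum_range_succ]
      have h1 : ∀ k ∈ Finset.range e, g.coeff k *
          ∑ j ∈ Finset.range (d + 1), f.coeff j * s (n - (d + e) + (k + j)) = 0 := by
        intro k hk
        rw [Finset.mem_range] at hk
        have hz := hfa (n - e + k) (by omega) (by omega)
        have harg : ∀ j ∈ Finset.range (d + 1),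
            f.coeff j * s (n - (d + e) + (k + j)) = f.coeff j * s (n - e + k - d + j) := by
          intro j hj
          rw [Finset.mem_range] at hj
          congr 2
          omega
        rw [Finset.sum_congr rfl harg, hz, mul_zero]
      rw [Finset.sum_eq_zero h1, zero_add]
      congr 1
      unfold disc
      apply Finset.sum_congr rfl
      intro j hj
      rw [Finset.mem_range] at hj
      congr 2
      omega
    have S2 : ∑ k ∈ Finset.range (e + 1), g.coeff k *
        ∑ j ∈ Finset.range (d + 1), f.coeff j * s (n - (d + e) + (k + j)) = 0 := by
      have swap : ∑ k ∈ Finset.range (e + 1), g.coeff k *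
          ∑ j ∈ Finset.range (d + 1), f.coeff j * s (n - (d + e) + (k + j))
          = ∑ j ∈ Finset.range (d + 1), f.coeff j *
            ∑ k ∈ Finset.range (e + 1), g.coeff k * s (n - (d + e) + (k + j)) := by
        simp_rw [Finset.mul_sum]
        rw [Finset.sum_comm]
        apply Finset.sum_congr rfl
        intro j _
        apply Finset.sum_congr rfl
        intro k _
        ring
      rw [swap]
      apply Finset.sum_eq_zero
      intro j hj
      rw [Finset.mem_range] at hj
      have hz := hga (n - d + j) (by omega) (by omega)
      have harg : ∀ k ∈ Finset.range (e + 1),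
          g.coeff k * s (n - (d + e) + (k + j)) = g.coeff k * s (n - d + j - e + k) := by
        intro k hk
        rw [Finset.mem_range] at hk
        congr 2
        omega
      rw [Finset.sum_congr rfl harg, hz, mul_zero]
    rw [← S1, S2]
  rcases mul_eq_zero.mp key with h1 | h1
  · exact Polynomial.leadingCoeff_ne_zero.mpr hg0 h1
  · exact hΔ h1
end

section
/- Let D be a commutative integral domain, s ∈ D^n, f a monic minimal polynomial of s, and t ∈ D^ℕ the infinite extension of s obtained by continuing the linear recurrence given by f. If the annihilator ideal Ann(t) ⊆ D[x] is principal, then Ann(t) = (f). -/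
open Polynomial Finset

/-- The annihilator set of an infinite sequence `t_1, t_2, …` (contains `0`). -/
def AnnSetInf (D : Type*) [CommRing D] (t : ℕ → D) : Set (Polynomial D) :=
  {f | ∀ j : ℕ, f.natDegree + 1 ≤ j →
    ∑ k ∈ Finset.range (f.natDegree + 1), f.coeff k * t (j - f.natDegree + k) = 0}

theorem ann_ext_principal (D : Type*) [CommRing D] [IsDomain D]
    (n : ℕ) (s t : ℕ → D) (f : Polynomial D)
    (hmonic : f.Monic)
    (hann : Annih D s n f)
    (hmin : ∀ g, Annih D s n g → f.natDegree ≤ g.natDegree)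
    (hext1 : ∀ j, 1 ≤ j → j ≤ n → t j = s j)
    (hext2 : ∀ j, max n f.natDegree < j →
      t j = -∑ k ∈ Finset.range f.natDegree, f.coeff k * t (j - f.natDegree + k))
    (hprinc : ∃ g : Polynomial D, AnnSetInf D t = {h | g ∣ h}) :
    AnnSetInf D t = {h | f ∣ h} := by
  obtain ⟨g, hg⟩ := hprinc
  set d := f.natDegree with hd
  have hf0 : f ≠ 0 := hmonic.ne_zero
  have hft : f ∈ AnnSetInf D t := by
    intro j hj
    by_cases hjn : j ≤ n
    · have h0 := hann.2 j hj hjn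
      rw [← h0]
      refine Finset.sum_congr rfl fun k hk => ?_
      simp only [Finset.mem_range] at hk
      congr 1
      exact hext1 _ (by omega) (by omega)
    · push_neg at hjn
      have hj2 : max n d < j := by simp only [max_lt_iff]; omega
      have ht := hext2 j hj2
      rw [Finset.sum_range_succ]
      have hjd : j - d + d = j := by omega
      rw [hjd, hmonic.coeff_natDegree, one_mul, ht]
      ring
  have hg0 : g ≠ 0 := by
    intro h
    have h2 := hft
    rw [hg, Set.mem_setOf_eq, h, zero_dvd_iff] at h2
    exact hf0 h2
  have hgs : Annih D s n g := by
    refine ⟨hg0, fun j hj hjn => ?_⟩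
    have hgt : g ∈ AnnSetInf D t := by rw [hg]; exact dvd_refl g
    have h0 := hgt j hj
    rw [← h0]
    refine Finset.sum_congr rfl fun k hk => ?_
    simp only [Finset.mem_range] at hk
    congr 1
    exact (hext1 _ (by omega) (by omega)).symm
  have hdeg : d ≤ g.natDegree := hmin g hgs
  have hgf : g ∣ f := by rw [hg, Set.mem_setOf_eq] at hft; exact hft
  obtain ⟨q, hq⟩ := hgf
  have hq0 : q ≠ 0 := by rintro rfl; rw [mul_zero] at hq; exact hf0 hq
  have hdq : q.natDegree = 0 := by
    have hm := Polynomial.natDegree_mul hg0 hq0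
    rw [← hq] at hm
    omega
  obtain ⟨a, rfl⟩ := Polynomial.natDegree_eq_zero.mp hdq
  have hlc : g.leadingCoeff * a = 1 := by
    have hm := hmonic
    rw [Monic, hq, leadingCoeff_mul, leadingCoeff_C] at hm
    exact hm
  have hfg : f ∣ g := by
    refine ⟨C g.leadingCoeff, ?_⟩
    rw [hq, mul_assoc, ← C_mul, mul_comm a, hlc, map_one, mul_one]
  rw [hg]
  ext x
  simp only [Set.mem_setOf_eq]
  exact ⟨fun h => dvd_trans hfg h, fun h => dvd_trans ⟨C a, hq⟩ h⟩
end

section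
/- Let D be a commutative integral domain, s ∈ D^n, and f ∈ D[x] nonzero with d = deg(f) ≥ 0. For d+1 ≤ j ≤ n, (f · s̲)_{d−j} = (f* · s̄)_j, where f* is the reciprocal polynomial and s̄(x) = s_1 x + ... + s_n x^n. Consequently, if f annihilates s then (f*, d) is a reciprocal pair for s, and if (g, ℓ) is a reciprocal pair for s then x^{ℓ−deg(g)} g* is a nonzero annihilator of s. -/
open Polynomial Finset

/-- `(g, ℓ)` is a reciprocal pair for `s_1,…,s_n`. -/
def RecipPair (D : Type*) [CommRing D] (s : ℕ → D) (n : ℕ) (g : Polynomial D) (ℓ : ℕ) : Prop :=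
  g.coeff 0 ≠ 0 ∧ g.natDegree ≤ ℓ ∧ ℓ ≤ n ∧
  ∀ j : ℕ, ℓ + 1 ≤ j → j ≤ n →
    ∑ k ∈ Finset.range (g.natDegree + 1), g.coeff k * s (j - k) = 0

theorem annih_recip_duality (D : Type*) [CommRing D] [IsDomain D]
    (n : ℕ) (s : ℕ → D) (f : Polynomial D) (hf : f ≠ 0) :
    (∀ j : ℕ, f.natDegree + 1 ≤ j → j ≤ n →
      ∑ k ∈ Finset.range (f.natDegree + 1), f.coeff k * s (j - f.natDegree + k)
        = ∑ k ∈ Finset.range (f.natDegree + 1), f.reverse.coeff k * s (j - k)) ∧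
    (Annih D s n f → f.natDegree ≤ n → RecipPair D s n f.reverse f.natDegree) ∧
    (∀ (g : Polynomial D) (ℓ : ℕ), RecipPair D s n g ℓ →
      Annih D s n (Polynomial.X ^ (ℓ - g.natDegree) * g.reverse)) := by
  set d := f.natDegree with hd
  have key : ∀ j : ℕ, d + 1 ≤ j → j ≤ n →
      ∑ k ∈ Finset.range (d + 1), f.coeff k * s (j - d + k)
        = ∑ k ∈ Finset.range (d + 1), f.reverse.coeff k * s (j - k) := by
    intro j hj1 hj2
    rw [← Finset.sum_range_reflect]
    apply Finset.sum_congr rfl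
    intro k hk
    simp only [Finset.mem_range] at hk
    rw [Polynomial.coeff_reverse, Polynomial.revAt_le (by omega)]
    congr 2
    omega
  refine ⟨key, ?_, ?_⟩
  · rintro ⟨-, hann⟩ hdn
    refine ⟨by rw [Polynomial.coeff_zero_reverse]; exact Polynomial.leadingCoeff_ne_zero.mpr hf,
      (Polynomial.reverse_natDegree_le f).trans le_rfl, hdn, ?_⟩
    intro j hj1 hj2
    have hsub : Finset.range (f.reverse.natDegree + 1) ⊆ Finset.range (d + 1) :=
      Finset.range_subset_range.mpr (by have := Polynomial.reverse_natDegree_le f; omega)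
    have : ∑ k ∈ Finset.range (f.reverse.natDegree + 1), f.reverse.coeff k * s (j - k)
        = ∑ k ∈ Finset.range (d + 1), f.reverse.coeff k * s (j - k) := by
      refine (Finset.sum_subset hsub fun k _ hk => ?_)
      simp only [Finset.mem_range, not_lt] at hk
      rw [Polynomial.coeff_eq_zero_of_natDegree_lt (by omega), zero_mul]
    rw [this, ← key j hj1 hj2, hann j hj1 hj2]
  · rintro g ℓ ⟨hg0, hgl, hln, hrec⟩
    have hg : g ≠ 0 := fun h => hg0 (by simp [h])
    obtain ⟨m, hm⟩ : ∃ m, g.natDegree = m := ⟨_, rfl⟩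
    rw [hm] at hgl hrec ⊢
    have htr : g.natTrailingDegree = 0 := Polynomial.natTrailingDegree_eq_zero.mpr (Or.inr hg0)
    have hrevdeg : g.reverse.natDegree = m := by
      rw [Polynomial.reverse_natDegree, htr, Nat.sub_zero, hm]
    have hne : Polynomial.X ^ (ℓ - m) * g.reverse ≠ 0 :=
      mul_ne_zero (pow_ne_zero _ Polynomial.X_ne_zero)
        (Polynomial.reverse_eq_zero.not.mpr hg)
    have hdeg : (Polynomial.X ^ (ℓ - m) * g.reverse).natDegree = ℓ := by
      rw [Polynomial.natDegree_mul (pow_ne_zero _ Polynomial.X_ne_zero)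
        (Polynomial.reverse_eq_zero.not.mpr hg), Polynomial.natDegree_X_pow, hrevdeg]
      omega
    refine ⟨hne, ?_⟩
    intro j hj1 hj2
    rw [hdeg] at hj1 ⊢
    have step1 : ∑ k ∈ Finset.range (ℓ + 1),
        (Polynomial.X ^ (ℓ - m) * g.reverse).coeff k * s (j - ℓ + k)
        = ∑ k ∈ Finset.Ico (ℓ - m) (ℓ + 1),
        (Polynomial.X ^ (ℓ - m) * g.reverse).coeff k * s (j - ℓ + k) := by
      rw [Finset.range_eq_Ico]
      refine (Finset.sum_subset (Finset.Ico_subset_Ico (by omega) le_rfl) fun k hk hk' => ?_).symm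
      simp only [Finset.mem_Ico] at hk hk'
      rw [Polynomial.coeff_X_pow_mul', if_neg (by omega), zero_mul]
    rw [step1, Finset.sum_Ico_eq_sum_range]
    have hrange : ℓ + 1 - (ℓ - m) = m + 1 := by omega
    rw [hrange]
    have step2 : ∀ i ∈ Finset.range (m + 1),
        (Polynomial.X ^ (ℓ - m) * g.reverse).coeff (ℓ - m + i) * s (j - ℓ + (ℓ - m + i))
        = g.coeff (m - i) * s (j - m + i) := by
      intro i hi
      simp only [Finset.mem_range] at hi
      rw [Polynomial.coeff_X_pow_mul', if_pos (by omega)]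
      have : ℓ - m + i - (ℓ - m) = i := by omega
      rw [this, Polynomial.coeff_reverse, Polynomial.revAt_le (by rw [hm]; omega), hm]
      have e3 : j - ℓ + (ℓ - m + i) = j - m + i := by omega
      rw [e3]
    rw [Finset.sum_congr rfl step2]
    have step3 : ∑ i ∈ Finset.range (m + 1), g.coeff (m - i) * s (j - m + i)
        = ∑ k ∈ Finset.range (m + 1), g.coeff k * s (j - k) := by
      rw [← Finset.sum_range_reflect]
      apply Finset.sum_congr rfl
      intro k hk
      simp only [Finset.mem_range] at hk
      have e1 : m - (m + 1 - 1 - k) = k := by omega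
      have e2 : j - m + (m + 1 - 1 - k) = j - k := by omega
      rw [e1, e2]
    rw [step3]
    exact hrec j hj1 hj2
end

section
/- Let D be a commutative integral domain and s ∈ D^n. For each 1 ≤ j ≤ n let LC_j denote the linear complexity of the prefix (s_1,...,s_j). Then Σ_{j=1}^n LC_j ≤ Σ_{j=1}^n ⌊(j+1)/2⌋ = ⌊(n+1)²/4⌋. -/
open Polynomial Finset

section W
variable {D : Type*} [CommRing D] (s : ℕ → D)

/-- window sum with explicit range -/
def WN (f : Polynomial D) (i N : ℕ) : D := ∑ k ∈ Finset.range N, f.coeff k * s (i + k)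

lemma WN_congr (f : Polynomial D) (i : ℕ) {N M : ℕ} (hN : f.natDegree < N) (hM : f.natDegree < M) :
    WN s f i N = WN s f i M := by
  wlog h : N ≤ M generalizing N M
  · exact (this hM hN (le_of_not_ge h)).symm
  unfold WN

  apply Finset.sum_subset (Finset.range_subset_range.2 h)
  intro k hk1 hk2
  rw [coeff_eq_zero_of_natDegree_lt (by simp at hk2; omega), zero_mul]

lemma annih_iff (n : ℕ) (f : Polynomial D) :
    Annih D s n f ↔ f ≠ 0 ∧ ∀ i : ℕ, 1 ≤ i → i + f.natDegree ≤ n →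
      WN s f i (f.natDegree + 1) = 0 := by
  unfold Annih WN
  refine and_congr_right fun _ => ⟨fun h i h1 h2 => ?_, fun h j h1 h2 => ?_⟩
  · have := h (i + f.natDegree) (by omega) h2
    simpa [Nat.add_sub_cancel] using this
  · have := h (j - f.natDegree) (by omega) (by omega)
    have hj : j - f.natDegree + f.natDegree = j := by omega
    exact this

lemma WN_sub (f g : Polynomial D) (i N : ℕ) :
    WN s (f - g) i N = WN s f i N - WN s g i N := by
  unfold WN
  rw [← Finset.sum_sub_distrib]
  exact Finset.sum_congr rfl fun k _ => by rw [coeff_sub, sub_mul]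

lemma WN_C_mul (a : D) (f : Polynomial D) (i N : ℕ) :
    WN s (C a * f) i N = a * WN s f i N := by
  unfold WN
  rw [Finset.mul_sum]
  exact Finset.sum_congr rfl fun k _ => by rw [coeff_C_mul, mul_assoc]

lemma WN_X_mul (f : Polynomial D) (i N : ℕ) :
    WN s (X * f) i (N + 1) = WN s f (i + 1) N := by
  unfold WN
  rw [Finset.sum_range_succ']
  simp [coeff_X_mul, add_assoc, add_comm 1]

lemma WN_X_pow_mul (f : Polynomial D) (i N t : ℕ) :
    WN s (X ^ t * f) i (N + t) = WN s f (i + t) N := by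
  induction t generalizing i with
  | zero => simp
  | succ t ih =>
    have h : X ^ (t + 1) * f = X * (X ^ t * f) := by ring
    rw [h, show N + (t + 1) = (N + t) + 1 from rfl, WN_X_mul, ih, show i + 1 + t = i + (t+1) by omega]

set_option linter.unusedSectionVars false
variable [IsDomain D]

lemma annih_X_pow (n : ℕ) : Annih D s n (X ^ n : Polynomial D) := by
  refine ⟨pow_ne_zero n X_ne_zero, fun j h1 h2 => absurd (h1.trans h2) (by simp)⟩

lemma LC_set_nonempty (n : ℕ) :
    {d : ℕ | ∃ f : Polynomial D, Annih D s n f ∧ f.natDegree = d}.Nonempty :=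
  ⟨n, X ^ n, annih_X_pow s n, natDegree_X_pow n⟩

lemma exists_min_annih (n : ℕ) :
    ∃ f : Polynomial D, Annih D s n f ∧ f.natDegree = LC D s n :=
  Nat.sInf_mem (LC_set_nonempty s n)

lemma LC_le_of_annih {n : ℕ} {f : Polynomial D} (h : Annih D s n f) :
    LC D s n ≤ f.natDegree :=
  Nat.sInf_le ⟨f, h, rfl⟩

lemma LC_le_self (n : ℕ) : LC D s n ≤ n := by
  simpa using LC_le_of_annih s (annih_X_pow s n)

lemma annih_anti {m n : ℕ} (hmn : m ≤ n) {f : Polynomial D} (h : Annih D s n f) :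
    Annih D s m f :=
  ⟨h.1, fun j h1 h2 => h.2 j h1 (h2.trans hmn)⟩

lemma LC_mono {m n : ℕ} (hmn : m ≤ n) : LC D s m ≤ LC D s n := by
  obtain ⟨f, hf, hd⟩ := exists_min_annih s n
  exact hd ▸ LC_le_of_annih s (annih_anti s hmn hf)

lemma LC_zero : LC D s 0 = 0 :=
  Nat.le_zero.1 (LC_le_self s 0)

lemma annih_succ {n : ℕ} {f : Polynomial D} (h : Annih D s n f) (hd : f.natDegree ≤ n)
    (hΔ : WN s f (n + 1 - f.natDegree) (f.natDegree + 1) = 0) : Annih D s (n + 1) f := by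
  rw [annih_iff] at h ⊢
  refine ⟨h.1, fun i h1 h2 => ?_⟩
  rcases Nat.lt_or_ge (i + f.natDegree) (n + 1) with hlt | hge
  · exact h.2 i h1 (by omega)
  · have : i = n + 1 - f.natDegree := by omega
    rw [this]; exact hΔ

lemma deg_sum_lower {n : ℕ} {f g : Polynomial D} (hf : Annih D s n f) (hfd : f.natDegree ≤ n)
    (hΔ : WN s f (n + 1 - f.natDegree) (f.natDegree + 1) ≠ 0)
    (hg : Annih D s (n + 1) g) : n + 1 ≤ f.natDegree + g.natDegree := by
  by_contra hcon
  set d := f.natDegree with hdd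
  set e := g.natDegree with hee
  have hde : d + e ≤ n := by omega
  set p := n + 1 - d - e with hp
  have hp1 : 1 ≤ p := by omega
  rw [annih_iff] at hf hg
  have hT : ∑ m ∈ Finset.range (e + 1), g.coeff m * WN s f (p + m) (d + 1)
      = ∑ k ∈ Finset.range (d + 1), f.coeff k * WN s g (p + k) (e + 1) := by
    unfold WN
    simp_rw [Finset.mul_sum]
    rw [Finset.sum_comm]
    refine Finset.sum_congr rfl fun k _ => Finset.sum_congr rfl fun m _ => ?_
    rw [show p + m + k = p + k + m by omega]; ring
  have hz1 : ∀ k ∈ Finset.range (d + 1), f.coeff k * WN s g (p + k) (e + 1) = 0 := by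
    intro k hk
    rw [Finset.mem_range] at hk
    rw [hg.2 (p + k) (by omega) (by omega), mul_zero]
  rw [Finset.sum_congr rfl hz1, Finset.sum_const_zero, Finset.sum_range_succ] at hT
  have hz2 : ∀ m ∈ Finset.range e, g.coeff m * WN s f (p + m) (d + 1) = 0 := by
    intro m hm
    rw [Finset.mem_range] at hm
    rw [hf.2 (p + m) (by omega) (by omega), mul_zero]
  rw [Finset.sum_congr rfl hz2, Finset.sum_const_zero, zero_add,
    show p + e = n + 1 - d by omega] at hT
  rcases mul_eq_zero.1 hT with h0 | h0
  · exact hg.1 (leadingCoeff_eq_zero.1 h0)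
  · exact hΔ h0

lemma LC_rec (n : ℕ) : LC D s (n + 1) ≤ max (LC D s n) (n + 1 - LC D s n) := by
  induction n using Nat.strong_induction_on with
  | _ n ih =>
  obtain ⟨f, hf, hfdeg⟩ := exists_min_annih s n
  set L := LC D s n with hLdef
  have hLn : L ≤ n := LC_le_self s n
  by_cases hΔ : WN s f (n + 1 - f.natDegree) (f.natDegree + 1) = 0
  · have := LC_le_of_annih s (annih_succ s hf (hfdeg ▸ hLn) hΔ)
    rw [hfdeg] at this
    exact this.trans (le_max_left _ _)
  by_cases hL0 : L = 0
  · rw [hL0]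
    simpa using LC_le_self s (n + 1)
  -- L ≥ 1 : find the last jump position
  have h0 : LC D s 0 < L := by rw [LC_zero]; omega
  set i₀ := Nat.findGreatest (fun i => LC D s i < L) n with hi₀def
  have hi₀P : LC D s i₀ < L :=
    Nat.findGreatest_spec (P := fun i => LC D s i < L) (Nat.zero_le n) h0
  have hi₀n : i₀ ≤ n := Nat.findGreatest_le n
  have hi₀lt : i₀ < n := by
    by_contra hcc
    have hin : i₀ = n := le_antisymm hi₀n (le_of_not_gt hcc)
    have h3 : LC D s n < L := by rw [← hin]; exact hi₀P
    omega
  set e := LC D s i₀ with hedef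
  have hei : e ≤ i₀ := LC_le_self s i₀
  have hLC1 : LC D s (i₀ + 1) = L := by
    have h1 : LC D s (i₀ + 1) ≤ L := hLdef ▸ LC_mono s (by omega)
    have h2 : ¬ LC D s (i₀ + 1) < L :=
      Nat.findGreatest_is_greatest (P := fun i => LC D s i < L) (n := n) (by omega) (by omega)
    omega
  have hIH : L ≤ i₀ + 1 - e := by
    have := ih i₀ hi₀lt
    rw [hLC1] at this
    omega
  obtain ⟨g, hg, hgdeg⟩ := exists_min_annih s i₀
  rw [← hedef] at hgdeg
  have hΔ' : WN s g (i₀ + 1 - e) (e + 1) ≠ 0 := by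
    intro hcon
    have hcon' : WN s g (i₀ + 1 - g.natDegree) (g.natDegree + 1) = 0 := by
      rw [hgdeg]; exact hcon
    have := LC_le_of_annih s (annih_succ s hg (hgdeg ▸ hei) hcon')
    rw [hgdeg, hLC1] at this
    omega
  have heL : e + L = i₀ + 1 := by
    obtain ⟨h₁, hh₁, hh₁deg⟩ := exists_min_annih s (i₀ + 1)
    have := deg_sum_lower s hg (hgdeg ▸ hei) (by rw [hgdeg]; exact hΔ') hh₁
    rw [hgdeg, hh₁deg, hLC1] at this
    omega
  rw [hfdeg] at hΔ
  -- abbreviations for the two discrepancies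
  set Δ : D := WN s f (n + 1 - L) (L + 1) with hΔdef
  set Δ' : D := WN s g (i₀ + 1 - e) (e + 1) with hΔ'def
  have hfz : ∀ i : ℕ, 1 ≤ i → i + L ≤ n → WN s f i (L + 1) = 0 := by
    intro i h1 h2
    have := ((annih_iff s n f).1 hf).2 i h1 (by rw [hfdeg]; omega)
    rwa [hfdeg] at this
  have hgz : ∀ i : ℕ, 1 ≤ i → i + e ≤ i₀ → WN s g i (e + 1) = 0 := by
    intro i h1 h2
    have := ((annih_iff s i₀ g).1 hg).2 i h1 (by rw [hgdeg]; omega)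
    rwa [hgdeg] at this
  have hf0 : f ≠ 0 := hf.1
  have hg0 : g ≠ 0 := hg.1
  rcases Nat.lt_or_ge (2 * L) (n + 2) with h2L | h2L
  · -- case 2L ≤ n+1 : new degree n+1-L
    set a := n + 1 - 2 * L with hadef
    set P : Polynomial D := C Δ' * (X ^ a * f) with hPdef
    set Q : Polynomial D := C Δ * g with hQdef
    have hPdeg : P.natDegree = a + L := by
      rw [hPdef, natDegree_C_mul hΔ', natDegree_mul (pow_ne_zero a X_ne_zero) hf0,
        natDegree_X_pow, hfdeg]
    have hQdeg : Q.natDegree = e := by rw [hQdef, natDegree_C_mul hΔ, hgdeg]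
    have hdeglt : Q.natDegree < P.natDegree := by rw [hPdeg, hQdeg]; omega
    have hPQdeg : (P - Q).natDegree = a + L := by
      rw [natDegree_sub_eq_left_of_natDegree_lt hdeglt, hPdeg]
    have hPQ0 : P - Q ≠ 0 := by
      intro hcon
      have hPe : P = Q := by
        have := sub_eq_zero.1 hcon; exact this
      rw [hPe] at hPdeg
      omega
    have hAnn : Annih D s (n + 1) (P - Q) := by
      rw [annih_iff]
      refine ⟨hPQ0, fun i h1 h2 => ?_⟩
      rw [hPQdeg] at h2 ⊢
      have hi : i ≤ L := by omega
      rw [WN_sub, hPdef, hQdef, WN_C_mul, WN_C_mul]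
      have hxp : WN s (X ^ a * f) i (a + L + 1) = WN s f (i + a) (L + 1) := by
        rw [show a + L + 1 = (L + 1) + a by omega, WN_X_pow_mul]
      have hgc : WN s g i (a + L + 1) = WN s g i (e + 1) := by
        refine WN_congr s g i ?_ ?_ <;> rw [hgdeg] <;> omega
      rw [hxp, hgc]
      rcases Nat.lt_or_ge i L with hiL | hiL
      · rw [hfz (i + a) (by omega) (by omega), hgz i h1 (by omega)]
        ring
      · have e1 : i + a = n + 1 - L := by omega
        have e2 : i = i₀ + 1 - e := by omega
        rw [e1, e2, ← hΔdef, ← hΔ'def]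
        ring
    have := LC_le_of_annih s hAnn
    rw [hPQdeg] at this
    exact this.trans (le_trans (by omega) (le_max_right _ _))
  · -- case 2L ≥ n+2 : degree stays L
    set t := 2 * L - (n + 1) with htdef
    set P : Polynomial D := C Δ' * f with hPdef
    set Q : Polynomial D := C Δ * (X ^ t * g) with hQdef
    have hPdeg : P.natDegree = L := by rw [hPdef, natDegree_C_mul hΔ', hfdeg]
    have hQdeg : Q.natDegree = t + e := by
      rw [hQdef, natDegree_C_mul hΔ, natDegree_mul (pow_ne_zero t X_ne_zero) hg0,
        natDegree_X_pow, hgdeg]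
    have hdeglt : Q.natDegree < P.natDegree := by rw [hPdeg, hQdeg]; omega
    have hPQdeg : (P - Q).natDegree = L := by
      rw [natDegree_sub_eq_left_of_natDegree_lt hdeglt, hPdeg]
    have hPQ0 : P - Q ≠ 0 := by
      intro hcon
      have hPe : P = Q := sub_eq_zero.1 hcon
      rw [hPe] at hPdeg
      omega
    have hAnn : Annih D s (n + 1) (P - Q) := by
      rw [annih_iff]
      refine ⟨hPQ0, fun i h1 h2 => ?_⟩
      rw [hPQdeg] at h2 ⊢
      rw [WN_sub, hPdef, hQdef, WN_C_mul, WN_C_mul]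
      have hxp : WN s (X ^ t * g) i (L + 1) = WN s g (i + t) (e + 1) := by
        rw [WN_congr s (X ^ t * g) i (N := L + 1) (M := (e + 1) + t) ?_ ?_, WN_X_pow_mul]
        · rw [natDegree_mul (pow_ne_zero t X_ne_zero) hg0, natDegree_X_pow, hgdeg]
          omega
        · rw [natDegree_mul (pow_ne_zero t X_ne_zero) hg0, natDegree_X_pow, hgdeg]
          omega
      rw [hxp]
      rcases Nat.lt_or_ge i (n + 1 - L) with hiL | hiL
      · rw [hfz i h1 (by omega), hgz (i + t) (by omega) (by omega)]
        ring
      · have e2 : i + t = i₀ + 1 - e := by omega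
        have e1 : i = n + 1 - L := by omega
        rw [e2, e1, ← hΔdef, ← hΔ'def]
        ring
    have := LC_le_of_annih s hAnn
    rw [hPQdeg] at this
    exact this.trans (le_max_left _ _)

lemma quad_step_int (a b N : ℤ) (h1 : a ≤ b) (h2 : b ≤ N - a) :
    a * (N - a) + b ≤ b * (N + 1 - b) := by
  nlinarith [mul_nonneg (by linarith : (0:ℤ) ≤ b - a) (by linarith : (0:ℤ) ≤ N - a - b)]

lemma sum_LC_le_quad (n : ℕ) :
    ∑ j ∈ Finset.Icc 1 n, LC D s j ≤ LC D s n * (n + 1 - LC D s n) := by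
  induction n with
  | zero => simp
  | succ n ihn =>
    rw [Finset.sum_Icc_succ_top (by omega : 1 ≤ n + 1)]
    have hc : LC D s n ≤ n := LC_le_self s n
    have hc' : LC D s (n + 1) ≤ n + 1 := LC_le_self s (n + 1)
    have hmono : LC D s n ≤ LC D s (n + 1) := LC_mono s (by omega)
    have hrec := LC_rec s n
    set c := LC D s n
    set c' := LC D s (n + 1)
    rcases eq_or_lt_of_le hmono with heq | hlt
    · rw [← heq]
      have : c * (n + 1 + 1 - c) = c * (n + 1 - c) + c := by
        rw [show n + 1 + 1 - c = (n + 1 - c) + 1 by omega, mul_add, mul_one]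
      omega
    · have h2 : c' ≤ n + 1 - c := by
        rcases max_cases c (n + 1 - c) with ⟨hm, _⟩ | ⟨hm, _⟩ <;> omega
      calc ∑ j ∈ Finset.Icc 1 n, LC D s j + c' ≤ c * (n + 1 - c) + c' := by omega
        _ ≤ c' * (n + 1 + 1 - c') := by
            zify [hc, hc', show c ≤ n + 1 by omega, show c' ≤ n + 1 + 1 by omega]
            have := quad_step_int (c : ℤ) (c' : ℤ) ((n : ℤ) + 1) (by exact_mod_cast hmono)
              (by zify [show c ≤ n + 1 by omega] at h2; linarith)
            linarith

lemma quad_le_div (L N : ℕ) (h : L ≤ N) : L * (N - L) ≤ N ^ 2 / 4 := by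
  obtain ⟨u, rfl⟩ := Nat.le.dest h
  rw [Nat.add_sub_cancel_left, Nat.le_div_iff_mul_le (by norm_num)]
  zify
  nlinarith [sq_nonneg ((L : ℤ) - (u : ℤ))]

lemma sum_halves (n : ℕ) : ∑ j ∈ Finset.Icc 1 n, (j + 1) / 2 = (n + 1) ^ 2 / 4 := by
  induction n with
  | zero => simp
  | succ n ihn =>
    rw [Finset.sum_Icc_succ_top (by omega : 1 ≤ n + 1), ihn]
    obtain ⟨m, rfl | rfl⟩ := Nat.even_or_odd' n
    · have e1 : (2 * m + 1) ^ 2 = 4 * (m * m) + 4 * m + 1 := by ring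
      have e2 : (2 * m + 1 + 1) ^ 2 = 4 * (m * m) + 8 * m + 4 := by ring
      rw [e1, e2]
      generalize m * m = q
      omega
    · have e1 : (2 * m + 1 + 1) ^ 2 = 4 * (m * m) + 8 * m + 4 := by ring
      have e2 : (2 * m + 1 + 1 + 1) ^ 2 = 4 * (m * m) + 12 * m + 9 := by ring
      rw [e1, e2]
      generalize m * m = q
      omega

end W

theorem LC_sum_le (D : Type*) [CommRing D] [IsDomain D] (n : ℕ) (s : ℕ → D) :
    ∑ j ∈ Finset.Icc 1 n, LC D s j ≤ ∑ j ∈ Finset.Icc 1 n, (j + 1) / 2 ∧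
    ∑ j ∈ Finset.Icc 1 n, (j + 1) / 2 = (n + 1) ^ 2 / 4 := by
  refine ⟨?_, sum_halves n⟩
  calc ∑ j ∈ Finset.Icc 1 n, LC D s j ≤ LC D s n * (n + 1 - LC D s n) :=
        sum_LC_le_quad s n
    _ ≤ (n + 1) ^ 2 / 4 := quad_le_div _ _ (by have := LC_le_self s n; omega)
    _ = ∑ j ∈ Finset.Icc 1 n, (j + 1) / 2 := (sum_halves n).symm
end

section
/- Let D be a commutative integral domain and s ∈ D^n a sequence whose prefix s^(n−1) is geometric with common ratio r ∈ D, r ≠ 0 (s_{j+1} = r·s_j for 1 ≤ j ≤ n−2, s_1 ≠ 0), but s is not geometric (s_n ≠ r·s_{n−1}). Then LC(s) = n − 1. -/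
open Polynomial Finset

theorem LC_of_geometric_prefix (D : Type*) [CommRing D] [IsDomain D]
    (n : ℕ) (hn : 2 ≤ n) (s : ℕ → D) (r : D) (hr : r ≠ 0)
    (hs1 : s 1 ≠ 0)
    (hgeo : ∀ j, 1 ≤ j → j ≤ n - 2 → s (j + 1) = r * s j)
    (hlast : s n ≠ r * s (n - 1)) :
    LC D s n = n - 1 := by
  -- geometric prefix formula
  have hpow : ∀ j, 1 ≤ j → j ≤ n - 1 → s j = r ^ (j - 1) * s 1 := by
    intro j
    induction j with
    | zero => intro h; omega
    | succ j ih =>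
      intro h1 h2
      rcases Nat.lt_or_ge 1 (j + 1) with h | h
      · have hj1 : 1 ≤ j := by omega
        have hj2 : j ≤ n - 2 := by omega
        rw [hgeo j hj1 hj2, ih hj1 (by omega),
          show j + 1 - 1 = (j - 1) + 1 by omega, pow_succ]
        ring
      · have : j = 0 := by omega
        subst this; simp
  -- membership: an explicit annihilator of degree n-1
  have hmem : (n - 1) ∈ {d : ℕ | ∃ f : Polynomial D, Annih D s n f ∧ f.natDegree = d} := by
    set g : Polynomial D := C (s 1) * X ^ (n - 1) - C (s n) with hg
    have hdg : g.natDegree = n - 1 := by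
      rw [hg, natDegree_sub_eq_left_of_natDegree_lt, natDegree_C_mul_X_pow _ _ hs1]
      rw [natDegree_C_mul_X_pow _ _ hs1, natDegree_C]
      omega
    have hc : ∀ k, g.coeff k =
        (if k = n - 1 then s 1 else 0) - (if k = 0 then s n else 0) := by
      intro k
      simp [hg, coeff_X_pow, coeff_C, mul_ite]
    refine ⟨g, ⟨?_, ?_⟩, hdg⟩
    · intro h
      have := hc (n - 1)
      rw [h] at this
      simp [show n - 1 ≠ 0 by omega] at this
      exact hs1 this.symm
    · intro j hj1 hj2
      have hj : j = n := by omega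
      rw [hj]
      rw [hdg, show n - (n - 1) = 1 by omega]
      have : ∑ k ∈ Finset.range (n - 1 + 1), g.coeff k * s (1 + k) =
          ∑ k ∈ Finset.range (n - 1 + 1),
            ((if k = n - 1 then s 1 * s (1 + k) else 0) -
             (if k = 0 then s n * s (1 + k) else 0)) := by
        apply Finset.sum_congr rfl
        intro k _
        rw [hc k]
        split_ifs <;> ring
      rw [this, Finset.sum_sub_distrib, Finset.sum_ite_eq', Finset.sum_ite_eq']
      simp [show 1 + (n - 1) = n by omega]
      ring
  -- lower bound: every annihilator has degree ≥ n-1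
  have hlb : ∀ d ∈ {d : ℕ | ∃ f : Polynomial D, Annih D s n f ∧ f.natDegree = d},
      n - 1 ≤ d := by
    rintro d ⟨f, ⟨hf0, hann⟩, rfl⟩
    by_contra hlt
    push_neg at hlt
    obtain ⟨m, hm, hm2⟩ : ∃ m, n = f.natDegree + m ∧ 2 ≤ m :=
      ⟨n - f.natDegree, by omega, by omega⟩
    -- first: f.eval r = 0
    have h1 := hann (f.natDegree + 1) le_rfl (by omega)
    rw [show f.natDegree + 1 - f.natDegree = 1 by omega] at h1
    have h1' : (∑ k ∈ Finset.range (f.natDegree + 1), f.coeff k * r ^ k) * s 1 = 0 := by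
      rw [Finset.sum_mul, ← h1]
      apply Finset.sum_congr rfl
      intro k hk
      simp only [Finset.mem_range] at hk
      rw [hpow (1 + k) (by omega) (by omega), show 1 + k - 1 = k by omega]
      ring
    have heval : f.eval r = 0 := by
      rcases mul_eq_zero.mp h1' with h | h
      · rwa [eval_eq_sum_range]
      · exact absurd h hs1
    -- second: use j = n
    have h2 := hann n (by omega) le_rfl
    rw [Finset.sum_range_succ] at h2
    have h2' : (∑ k ∈ Finset.range f.natDegree, f.coeff k * r ^ k) *
        (r ^ (m - 1) * s 1) + f.coeff f.natDegree * s n = 0 := by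
      rw [← h2]
      congr 1
      · rw [Finset.sum_mul]
        apply Finset.sum_congr rfl
        intro k hk
        simp only [Finset.mem_range] at hk
        rw [hpow (n - f.natDegree + k) (by omega) (by omega),
          show n - f.natDegree + k - 1 = k + (m - 1) by omega, pow_add]
        ring
      · rw [show n - f.natDegree + f.natDegree = n by omega]
    have hsum : ∑ k ∈ Finset.range f.natDegree, f.coeff k * r ^ k =
        -(f.coeff f.natDegree * r ^ f.natDegree) := by
      have h3 : ∑ k ∈ Finset.range (f.natDegree + 1), f.coeff k * r ^ k = 0 := by
        rw [← eval_eq_sum_range]; exact heval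
      rw [Finset.sum_range_succ] at h3
      exact eq_neg_of_add_eq_zero_left h3
    rw [hsum] at h2'
    have hkey : f.coeff f.natDegree * (s n - r ^ (f.natDegree + (m - 1)) * s 1) = 0 := by
      rw [pow_add]
      linear_combination h2'
    have hcne : f.coeff f.natDegree ≠ 0 := fun h => hf0 (leadingCoeff_eq_zero.mp h)
    have hsn : s n = r ^ (f.natDegree + (m - 1)) * s 1 := by
      rcases mul_eq_zero.mp hkey with h | h
      · exact absurd h hcne
      · exact sub_eq_zero.mp h
    apply hlast
    rw [hpow (n - 1) (by omega) le_rfl, hsn,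
      show f.natDegree + (m - 1) = (n - 1 - 1) + 1 by omega, pow_succ]
    ring
  exact le_antisymm (Nat.sInf_le hmem) (le_csInf ⟨_, hmem⟩ hlb)
end

section
/- Let D be a commutative integral domain, s ∈ D^n with n ≥ 2, h a minimal polynomial of the prefix s^(n−1) with Δ_n(h) ≠ 0, and g any nonzero annihilator of s. Then deg(g) ≥ max(n − deg(h), deg(h)). -/
open Polynomial Finset

theorem deg_ge_max_of_min_prefix (D : Type*) [CommRing D] [IsDomain D]
    (n : ℕ) (hn : 2 ≤ n) (s : ℕ → D) (h : Polynomial D)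
    (hann : Annih D s (n - 1) h)
    (hmin : ∀ g, Annih D s (n - 1) g → h.natDegree ≤ g.natDegree)
    (hΔ : disc D s n h ≠ 0)
    (g : Polynomial D) (hg : Annih D s n g) :
    max (n - h.natDegree) h.natDegree ≤ g.natDegree := by
  obtain ⟨hg0, hgann⟩ := hg
  obtain ⟨hh0, hhann⟩ := hann
  set d := h.natDegree with hd
  set e := g.natDegree with he
  have hde : d ≤ e :=
    hmin g ⟨hg0, fun j hj1 hj2 => hgann j hj1 (hj2.trans (Nat.sub_le n 1))⟩
  refine max_le ?_ hde
  by_contra hlt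
  push_neg at hlt
  have hdn : d + e + 1 ≤ n := by omega
  have key : ∑ i ∈ Finset.range (d+1), ∑ k ∈ Finset.range (e+1),
      h.coeff i * (g.coeff k * s (n - d - e + i + k)) = 0 := by
    apply Finset.sum_eq_zero
    intro i hi
    rw [Finset.mem_range] at hi
    rw [← Finset.mul_sum]
    have hrw : ∑ k ∈ Finset.range (e+1), g.coeff k * s (n - d - e + i + k)
        = ∑ k ∈ Finset.range (e+1), g.coeff k * s ((n - d + i) - e + k) := by
      apply Finset.sum_congr rfl
      intro k hk
      congr 2
      omega
    rw [hrw, hgann (n - d + i) (by omega) (by omega), mul_zero]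
  rw [Finset.sum_comm, Finset.sum_range_succ] at key
  have hzero : ∑ k ∈ Finset.range e, ∑ i ∈ Finset.range (d+1),
      h.coeff i * (g.coeff k * s (n - d - e + i + k)) = 0 := by
    apply Finset.sum_eq_zero
    intro k hk
    rw [Finset.mem_range] at hk
    have hrw : ∑ i ∈ Finset.range (d+1), h.coeff i * (g.coeff k * s (n - d - e + i + k))
        = g.coeff k * ∑ i ∈ Finset.range (d+1), h.coeff i * s ((n - e + k) - d + i) := by
      rw [Finset.mul_sum]
      apply Finset.sum_congr rfl
      intro i hi
      have : (n - e + k) - d + i = n - d - e + i + k := by omega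
      rw [this]; ring
    rw [hrw, hhann (n - e + k) (by omega) (by omega), mul_zero]
  rw [hzero, zero_add] at key
  have hlast : ∑ i ∈ Finset.range (d+1), h.coeff i * (g.coeff e * s (n - d - e + i + e))
      = g.coeff e * disc D s n h := by
    rw [disc, Finset.mul_sum]
    apply Finset.sum_congr rfl
    intro i hi
    have : n - d - e + i + e = n - d + i := by omega
    rw [this]; ring
  rw [hlast] at key
  rcases mul_eq_zero.mp key with h1 | h2
  · exact Polynomial.leadingCoeff_ne_zero.mpr hg0 h1
  · exact hΔ h2
end
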